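/- Define the transformation on (ξ^0, ξ^a, 𝜉̃_a) for (a b; c d) ∈ SL(2,ℝ) by ξ^0 ↦ (aξ^0+b)/(cξ^0+d), ξ^a ↦ ξ^a/(cξ^0+d), 𝜉̃_a ↦ 𝜉̃_a + (c/(2(cξ^0+d)))κ_{aef}ξ^eξ^f, together with (𝜉̃_0, α̃) ↦ (d𝜉̃_0 - cα̃ + (κ_{efg}ξ^eξ^fξ^g/6)·c²/(cξ^0+d), -b𝜉̃_0 + aα̃ - (κ_{efg}ξ^eξ^fξ^g/6)·(c²(aξ^0+b)+2c)/(cξ^0+d)²). Then under this transformation the one-form d α̃ + ξ^0 d𝜉̃_0 + ξ^a d𝜉̃_a transforms by (d α̃ + ξ^i d𝜉̃_i) ↦ (d α̃ + ξ^i d𝜉̃_i)/(cξ^0+d), on the open set where cξ^0 + d ≠ 0. -/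

import Mathlib

open Finset

private lemma key19 (a b c d x0 u Q S T p q D iD : ℂ) (hdet : a*d - b*c = 1)
    (hDef : D = c*x0 + d) (hiD : D * iD = 1) (hD0 : D ≠ 0) :
    (-b*p + a*q
      - ((((S/2)*(c^2*(a*x0+b)+2*c) + (Q/6)*(c^2*(a*u))) * D^2
          - (Q/6)*(c^2*(a*x0+b)+2*c) * (2*D*(c*u))) * iD^4))
    + ((a*x0+b)*iD) * (d*p - c*q + (((S/2)*c^2)*D - ((Q/6)*c^2)*(c*u)) * iD^2)
    + (T*iD - c^2*u*Q/2*iD^3 + c*S*iD^2)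
    = (q + x0*p + T)*iD := by
  apply mul_right_cancel₀ (pow_ne_zero 4 hD0)
  linear_combination
    (d^3*q + d^3*x0*p + 3*c*d^2*x0*q + 3*c*d^2*x0^2*p - (1/6)*c^2*d*u*Q
      + 3*c^2*d*x0^2*q + 3*c^2*d*x0^3*p - (1/6)*c^3*x0*u*Q + c^3*x0^3*q
      + c^3*x0^4*p) * hdet
    + ((-1)*q*D^3 + (-1)*x0*p*D^3 + (-1)*c*S*D^4*iD^2 + (-1)*c*S*D^5*iD^3
      + (1/6)*c^2*u*Q*D + (1/6)*c^2*u*Q*D^2*iD + (1/6)*c^2*u*Q*D^3*iD^2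
      + (2/3)*c^2*u*Q*D^4*iD^3 + b*d*p*D^3 + (-1)*b*c*q*D^3
      + (-1/2)*b*c^2*S*D^5*iD^3 + (1/6)*b*c^3*u*Q*D + (1/6)*b*c^3*u*Q*D^2*iD
      + (1/6)*b*c^3*u*Q*D^3*iD^2 + (1/3)*b*c^3*u*Q*D^4*iD^3 + a*d*x0*p*D^3
      + (-1)*a*c*x0*q*D^3 + (-1/6)*a*c^2*u*Q*D^2 + (-1/6)*a*c^2*u*Q*D^3*iD
      + (-1/6)*a*c^2*u*Q*D^4*iD^2 + (-1/6)*a*c^2*u*Q*D^5*iD^3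
      + (-1/2)*a*c^2*x0*S*D^5*iD^3 + (1/6)*a*c^3*x0*u*Q*D
      + (1/6)*a*c^3*x0*u*Q*D^2*iD + (1/6)*a*c^3*x0*u*Q*D^3*iD^2
      + (1/3)*a*c^3*x0*u*Q*D^4*iD^3) * hiD
    + ((-1)*q*D^2 + (-1)*x0*p*D^2 + (-1)*d*q*D + (-1)*d*x0*p*D + (-1)*d^2*q
      + (-1)*d^2*x0*p + (-1)*c*x0*q*D + (-1)*c*x0^2*p*D + (-2)*c*d*x0*q
      + (-2)*c*d*x0^2*p + (1/6)*c^2*u*Q + (-1)*c^2*x0^2*q + (-1)*c^2*x0^3*p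
      + (-1)*b*p*D^3 + (-1)*b*c*q*D^2 + (-1)*b*c*x0*p*D^2 + (-1)*b*c*d*q*D
      + (-1)*b*c*d*x0*p*D + (-1)*b*c*d^2*q + (-1)*b*c*d^2*x0*p
      + (-1)*b*c^2*x0*q*D + (-1)*b*c^2*x0^2*p*D + (-2)*b*c^2*d*x0*q
      + (-2)*b*c^2*d*x0^2*p + (1/6)*b*c^3*u*Q + (-1)*b*c^3*x0^2*q
      + (-1)*b*c^3*x0^3*p + a*q*D^3 + a*d*q*D^2 + a*d*x0*p*D^2 + a*d^2*q*D
      + a*d^2*x0*p*D + a*d^3*q + a*d^3*x0*p + a*c*d*x0*q*D + a*c*d*x0^2*p*D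
      + 2*a*c*d^2*x0*q + 2*a*c*d^2*x0^2*p + (-1/6)*a*c^2*u*Q*D
      + (-1/6)*a*c^2*d*u*Q + a*c^2*d*x0^2*q + a*c^2*d*x0^3*p) * hDef

private lemma sum_split3 {n : ℕ} (f g h : Fin n → ℂ) :
    ∑ e, (f e + g e + h e) = (∑ e, f e) + (∑ e, g e) + ∑ e, h e := by
  rw [Finset.sum_add_distrib (f := fun e => f e + g e) (g := h),
    Finset.sum_add_distrib (f := f) (g := g)]

private lemma sum_pull {n : ℕ} (cst : ℂ) (f : Fin n → ℂ) :
    ∑ e, cst * f e = cst * ∑ e, f e := (Finset.mul_sum _ _ _).symm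

private lemma sum3_rot {n : ℕ} (f : Fin n → Fin n → Fin n → ℂ) :
    ∑ i, ∑ j, ∑ l, f i j l = ∑ l, ∑ i, ∑ j, f i j l := by
  calc ∑ i, ∑ j, ∑ l, f i j l = ∑ i, ∑ l, ∑ j, f i j l :=
        Finset.sum_congr rfl fun i _ => Finset.sum_comm
    _ = ∑ l, ∑ i, ∑ j, f i j l := Finset.sum_comm

/-- the lifted S-duality transformation on the holomorphic
Darboux coordinates `(ξ⁰, ξᵃ, ξ̃₀, ξ̃ₐ, α̃)` rescales the contact form:
`dα̃ + ξⁱdξ̃ᵢ ↦ (dα̃ + ξⁱdξ̃ᵢ)/(cξ⁰+d)`, where one-forms are represented by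
derivatives along an arbitrary differentiable path. -/
theorem stmt_19 {n : ℕ} (κ : Fin n → Fin n → Fin n → ℝ)
    (hκ : ∀ a b c, κ a b c = κ b a c ∧ κ a b c = κ a c b)
    (a b c d : ℝ) (hdet : a * d - b * c = 1)
    (ξ0 : ℝ → ℂ) (ξ : ℝ → Fin n → ℂ) (ξt0 : ℝ → ℂ) (ξt : ℝ → Fin n → ℂ)
    (αt : ℝ → ℂ)
    (s₀ : ℝ) (hden : (c : ℂ) * ξ0 s₀ + d ≠ 0)
    (h1 : DifferentiableAt ℝ ξ0 s₀)
    (h2 : ∀ e, DifferentiableAt ℝ (fun s => ξ s e) s₀)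
    (h3 : DifferentiableAt ℝ ξt0 s₀)
    (h4 : ∀ e, DifferentiableAt ℝ (fun s => ξt s e) s₀)
    (h5 : DifferentiableAt ℝ αt s₀) :
    let cub : ℝ → ℂ := fun s => ∑ i, ∑ j, ∑ l, (κ i j l : ℂ) * ξ s i * ξ s j * ξ s l
    let ξ0' : ℝ → ℂ := fun s => ((a : ℂ) * ξ0 s + b) / ((c : ℂ) * ξ0 s + d)
    let ξ' : ℝ → Fin n → ℂ := fun s e => ξ s e / ((c : ℂ) * ξ0 s + d)
    let ξt' : ℝ → Fin n → ℂ := fun s e =>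
      ξt s e + (c : ℂ) / (2 * ((c : ℂ) * ξ0 s + d))
        * ∑ i, ∑ j, (κ e i j : ℂ) * ξ s i * ξ s j
    let ξt0' : ℝ → ℂ := fun s =>
      (d : ℂ) * ξt0 s - (c : ℂ) * αt s
        + (cub s / 6) * (c : ℂ)^2 / ((c : ℂ) * ξ0 s + d)
    let αt' : ℝ → ℂ := fun s =>
      -(b : ℂ) * ξt0 s + (a : ℂ) * αt s
        - (cub s / 6) * ((c : ℂ)^2 * ((a : ℂ) * ξ0 s + b) + 2 * c)
          / ((c : ℂ) * ξ0 s + d)^2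
    deriv αt' s₀ + ξ0' s₀ * deriv ξt0' s₀
        + ∑ e, ξ' s₀ e * deriv (fun s => ξt' s e) s₀
      = (deriv αt s₀ + ξ0 s₀ * deriv ξt0 s₀
          + ∑ e, ξ s₀ e * deriv (fun s => ξt s e) s₀) / ((c : ℂ) * ξ0 s₀ + d) := by
  intro cub ξ0' ξ' ξt' ξt0' αt'
  have hdetC : (a : ℂ) * (d : ℂ) - (b : ℂ) * (c : ℂ) = 1 := by exact_mod_cast hdet
  have Hx0 : HasDerivAt ξ0 (deriv ξ0 s₀) s₀ := h1.hasDerivAt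
  have Hx : ∀ e, HasDerivAt (fun s => ξ s e) (deriv (fun s => ξ s e) s₀) s₀ :=
    fun e => (h2 e).hasDerivAt
  have Ht0 : HasDerivAt ξt0 (deriv ξt0 s₀) s₀ := h3.hasDerivAt
  have Ht : ∀ e, HasDerivAt (fun s => ξt s e) (deriv (fun s => ξt s e) s₀) s₀ :=
    fun e => (h4 e).hasDerivAt
  have HAd : HasDerivAt αt (deriv αt s₀) s₀ := h5.hasDerivAt
  have HD : HasDerivAt (fun s => (c : ℂ) * ξ0 s + (d : ℂ)) ((c : ℂ) * deriv ξ0 s₀) s₀ :=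
    (Hx0.const_mul _).add_const _
  have HD2 : HasDerivAt (fun s => ((c : ℂ) * ξ0 s + (d : ℂ))^2)
      (2 * ((c : ℂ) * ξ0 s₀ + (d : ℂ)) * ((c : ℂ) * deriv ξ0 s₀)) s₀ := by
    have h := HD.fun_mul HD
    simp only [← pow_two] at h
    exact h.congr_deriv (by ring)
  -- derivative of the cubic
  have Hcub : HasDerivAt cub
      (∑ i, ∑ j, ∑ l,
        (((κ i j l : ℂ) * deriv (fun s => ξ s i) s₀ * ξ s₀ j
            + (κ i j l : ℂ) * ξ s₀ i * deriv (fun s => ξ s j) s₀) * ξ s₀ l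
          + (κ i j l : ℂ) * ξ s₀ i * ξ s₀ j * deriv (fun s => ξ s l) s₀)) s₀ := by
    refine HasDerivAt.fun_sum fun i _ => HasDerivAt.fun_sum fun j _ => HasDerivAt.fun_sum fun l _ => ?_
    exact (((Hx i).const_mul _).mul (Hx j)).mul (Hx l)
  have hQ3 : (∑ i, ∑ j, ∑ l,
        (((κ i j l : ℂ) * deriv (fun s => ξ s i) s₀ * ξ s₀ j
            + (κ i j l : ℂ) * ξ s₀ i * deriv (fun s => ξ s j) s₀) * ξ s₀ l
          + (κ i j l : ℂ) * ξ s₀ i * ξ s₀ j * deriv (fun s => ξ s l) s₀))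
      = 3 * ∑ i, ∑ j, ∑ l, (κ i j l : ℂ) * deriv (fun s => ξ s i) s₀ * ξ s₀ j * ξ s₀ l := by
    have hsplit : (∑ i, ∑ j, ∑ l,
        (((κ i j l : ℂ) * deriv (fun s => ξ s i) s₀ * ξ s₀ j
            + (κ i j l : ℂ) * ξ s₀ i * deriv (fun s => ξ s j) s₀) * ξ s₀ l
          + (κ i j l : ℂ) * ξ s₀ i * ξ s₀ j * deriv (fun s => ξ s l) s₀))
        = (∑ i, ∑ j, ∑ l, (κ i j l : ℂ) * deriv (fun s => ξ s i) s₀ * ξ s₀ j * ξ s₀ l)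
          + ((∑ i, ∑ j, ∑ l, (κ i j l : ℂ) * deriv (fun s => ξ s j) s₀ * ξ s₀ i * ξ s₀ l)
            + ∑ i, ∑ j, ∑ l, (κ i j l : ℂ) * deriv (fun s => ξ s l) s₀ * ξ s₀ i * ξ s₀ j) := by
      simp only [← Finset.sum_add_distrib]
      refine Finset.sum_congr rfl fun i _ => Finset.sum_congr rfl fun j _ =>
        Finset.sum_congr rfl fun l _ => by ring
    have h2' : (∑ i, ∑ j, ∑ l, (κ i j l : ℂ) * deriv (fun s => ξ s j) s₀ * ξ s₀ i * ξ s₀ l)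
        = ∑ i, ∑ j, ∑ l, (κ i j l : ℂ) * deriv (fun s => ξ s i) s₀ * ξ s₀ j * ξ s₀ l := by
      rw [Finset.sum_comm]
      refine Finset.sum_congr rfl fun j _ => Finset.sum_congr rfl fun i _ =>
        Finset.sum_congr rfl fun l _ => ?_
      rw [(hκ i j l).1]
    have h3' : (∑ i, ∑ j, ∑ l, (κ i j l : ℂ) * deriv (fun s => ξ s l) s₀ * ξ s₀ i * ξ s₀ j)
        = ∑ i, ∑ j, ∑ l, (κ i j l : ℂ) * deriv (fun s => ξ s i) s₀ * ξ s₀ j * ξ s₀ l := by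
      rw [sum3_rot]
      refine Finset.sum_congr rfl fun l _ => Finset.sum_congr rfl fun i _ =>
        Finset.sum_congr rfl fun j _ => ?_
      rw [(hκ i j l).2, (hκ i l j).1]
    rw [hsplit, h2', h3']
    ring
  -- derivative of ξt0'
  have hdb : deriv ξt0' s₀ = ((d : ℂ) * deriv ξt0 s₀ - (c : ℂ) * deriv αt s₀)
      + (((∑ i, ∑ j, ∑ l,
        (((κ i j l : ℂ) * deriv (fun s => ξ s i) s₀ * ξ s₀ j
            + (κ i j l : ℂ) * ξ s₀ i * deriv (fun s => ξ s j) s₀) * ξ s₀ l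
          + (κ i j l : ℂ) * ξ s₀ i * ξ s₀ j * deriv (fun s => ξ s l) s₀)) / 6 * (c : ℂ)^2) * ((c : ℂ) * ξ0 s₀ + (d : ℂ))
        - (cub s₀ / 6 * (c : ℂ)^2) * ((c : ℂ) * deriv ξ0 s₀)) / ((c : ℂ) * ξ0 s₀ + (d : ℂ))^2 :=
    (((Ht0.const_mul _).sub (HAd.const_mul _)).add
      (((Hcub.div_const 6).mul_const _).div HD hden)).deriv
  -- derivative of αt'
  have HM : HasDerivAt (fun s => (c : ℂ)^2 * ((a : ℂ) * ξ0 s + (b : ℂ)) + 2 * (c : ℂ))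
      ((c : ℂ)^2 * ((a : ℂ) * deriv ξ0 s₀)) s₀ :=
    (((Hx0.const_mul _).add_const _).const_mul _).add_const _
  have hda : deriv αt' s₀ = (-(b : ℂ) * deriv ξt0 s₀ + (a : ℂ) * deriv αt s₀)
      - (((∑ i, ∑ j, ∑ l,
        (((κ i j l : ℂ) * deriv (fun s => ξ s i) s₀ * ξ s₀ j
            + (κ i j l : ℂ) * ξ s₀ i * deriv (fun s => ξ s j) s₀) * ξ s₀ l
          + (κ i j l : ℂ) * ξ s₀ i * ξ s₀ j * deriv (fun s => ξ s l) s₀)) / 6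
            * ((c : ℂ)^2 * ((a : ℂ) * ξ0 s₀ + (b : ℂ)) + 2 * (c : ℂ))
          + cub s₀ / 6 * ((c : ℂ)^2 * ((a : ℂ) * deriv ξ0 s₀))) * ((c : ℂ) * ξ0 s₀ + (d : ℂ))^2
        - (cub s₀ / 6 * ((c : ℂ)^2 * ((a : ℂ) * ξ0 s₀ + (b : ℂ)) + 2 * (c : ℂ)))
            * (2 * ((c : ℂ) * ξ0 s₀ + (d : ℂ)) * ((c : ℂ) * deriv ξ0 s₀))) / (((c : ℂ) * ξ0 s₀ + (d : ℂ))^2)^2 :=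
    (((Ht0.const_mul _).add (HAd.const_mul _)).sub
      (((Hcub.div_const 6).mul HM).div HD2 (pow_ne_zero 2 hden))).deriv
  -- derivatives of the ξt' e
  have HP : ∀ e, HasDerivAt (fun s => ∑ i, ∑ j, (κ e i j : ℂ) * ξ s i * ξ s j)
      (∑ i, ∑ j, ((κ e i j : ℂ) * deriv (fun s => ξ s i) s₀ * ξ s₀ j
        + (κ e i j : ℂ) * ξ s₀ i * deriv (fun s => ξ s j) s₀)) s₀ := by
    intro e
    refine HasDerivAt.fun_sum fun i _ => HasDerivAt.fun_sum fun j _ => ?_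
    exact ((Hx i).const_mul _).mul (Hx j)
  have Hfrac : HasDerivAt (fun s => (c : ℂ) / (2 * ((c : ℂ) * ξ0 s + (d : ℂ))))
      ((0 * (2 * ((c : ℂ) * ξ0 s₀ + (d : ℂ))) - (c : ℂ) * (2 * ((c : ℂ) * deriv ξ0 s₀))) / (2 * ((c : ℂ) * ξ0 s₀ + (d : ℂ)))^2) s₀ :=
    (hasDerivAt_const s₀ _).div (HD.const_mul 2) (mul_ne_zero two_ne_zero hden)
  have hde : ∀ e, deriv (fun s => ξt' s e) s₀ = deriv (fun s => ξt s e) s₀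
      + (((0 * (2 * ((c : ℂ) * ξ0 s₀ + (d : ℂ))) - (c : ℂ) * (2 * ((c : ℂ) * deriv ξ0 s₀))) / (2 * ((c : ℂ) * ξ0 s₀ + (d : ℂ)))^2)
          * (∑ i, ∑ j, (κ e i j : ℂ) * ξ s₀ i * ξ s₀ j)
        + ((c : ℂ) / (2 * ((c : ℂ) * ξ0 s₀ + (d : ℂ))))
          * ∑ i, ∑ j, ((κ e i j : ℂ) * deriv (fun s => ξ s i) s₀ * ξ s₀ j
            + (κ e i j : ℂ) * ξ s₀ i * deriv (fun s => ξ s j) s₀)) :=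
    fun e => ((Ht e).add (Hfrac.mul (HP e))).deriv
  -- sums over e
  have hxP : ∑ e, ξ s₀ e * (∑ i, ∑ j, (κ e i j : ℂ) * ξ s₀ i * ξ s₀ j) = cub s₀ := by
    simp only [cub]
    refine Finset.sum_congr rfl fun e _ => ?_
    rw [Finset.mul_sum]
    refine Finset.sum_congr rfl fun i _ => ?_
    rw [Finset.mul_sum]
    exact Finset.sum_congr rfl fun j _ => by ring
  have hxdP : ∑ e, ξ s₀ e * (∑ i, ∑ j, ((κ e i j : ℂ) * deriv (fun s => ξ s i) s₀ * ξ s₀ j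
        + (κ e i j : ℂ) * ξ s₀ i * deriv (fun s => ξ s j) s₀))
      = 2 * ∑ i, ∑ j, ∑ l, (κ i j l : ℂ) * deriv (fun s => ξ s i) s₀ * ξ s₀ j * ξ s₀ l := by
    have hstep : ∑ e, ξ s₀ e * (∑ i, ∑ j, ((κ e i j : ℂ) * deriv (fun s => ξ s i) s₀ * ξ s₀ j
          + (κ e i j : ℂ) * ξ s₀ i * deriv (fun s => ξ s j) s₀))
        = (∑ e, ∑ i, ∑ j, (κ e i j : ℂ) * deriv (fun s => ξ s i) s₀ * ξ s₀ e * ξ s₀ j)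
          + ∑ e, ∑ i, ∑ j, (κ e i j : ℂ) * deriv (fun s => ξ s j) s₀ * ξ s₀ e * ξ s₀ i := by
      simp only [← Finset.sum_add_distrib]
      refine Finset.sum_congr rfl fun e _ => ?_
      rw [Finset.mul_sum]
      refine Finset.sum_congr rfl fun i _ => ?_
      rw [Finset.mul_sum]
      exact Finset.sum_congr rfl fun j _ => by ring
    have hp1 : (∑ e, ∑ i, ∑ j, (κ e i j : ℂ) * deriv (fun s => ξ s i) s₀ * ξ s₀ e * ξ s₀ j)
        = ∑ i, ∑ j, ∑ l, (κ i j l : ℂ) * deriv (fun s => ξ s i) s₀ * ξ s₀ j * ξ s₀ l := by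
      rw [Finset.sum_comm]
      refine Finset.sum_congr rfl fun i _ => Finset.sum_congr rfl fun e _ =>
        Finset.sum_congr rfl fun j _ => ?_
      rw [(hκ e i j).1]
    have hp2 : (∑ e, ∑ i, ∑ j, (κ e i j : ℂ) * deriv (fun s => ξ s j) s₀ * ξ s₀ e * ξ s₀ i)
        = ∑ i, ∑ j, ∑ l, (κ i j l : ℂ) * deriv (fun s => ξ s i) s₀ * ξ s₀ j * ξ s₀ l := by
      rw [sum3_rot]
      refine Finset.sum_congr rfl fun j _ => Finset.sum_congr rfl fun e _ =>
        Finset.sum_congr rfl fun i _ => ?_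
      rw [(hκ e i j).2, (hκ e j i).1]
    rw [hstep, hp1, hp2]
    ring
  rw [hda, hdb, hQ3]
  simp only [hde, ξ0', ξ']
  obtain ⟨Dv, hDvdef⟩ : ∃ x : ℂ, ((c : ℂ) * ξ0 s₀ + (d : ℂ)) = x := ⟨_, rfl⟩
  rw [hDvdef] at hden ⊢
  have hsum : ∑ e, ξ s₀ e / Dv * (deriv (fun s => ξt s e) s₀
      + ((0 * (2 * Dv) - (c : ℂ) * (2 * ((c : ℂ) * deriv ξ0 s₀))) / (2 * Dv)^2
          * (∑ i, ∑ j, (κ e i j : ℂ) * ξ s₀ i * ξ s₀ j)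
        + (c : ℂ) / (2 * Dv)
          * ∑ i, ∑ j, ((κ e i j : ℂ) * deriv (fun s => ξ s i) s₀ * ξ s₀ j
            + (κ e i j : ℂ) * ξ s₀ i * deriv (fun s => ξ s j) s₀)))
      = (∑ e, ξ s₀ e * deriv (fun s => ξt s e) s₀) / Dv
        - (c : ℂ)^2 * deriv ξ0 s₀ * cub s₀ / (2 * Dv^3)
        + (c : ℂ) * (∑ i, ∑ j, ∑ l, (κ i j l : ℂ) * deriv (fun s => ξ s i) s₀ * ξ s₀ j * ξ s₀ l)
          / Dv^2 := by
    calc ∑ e, ξ s₀ e / Dv * (deriv (fun s => ξt s e) s₀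
        + ((0 * (2 * Dv) - (c : ℂ) * (2 * ((c : ℂ) * deriv ξ0 s₀))) / (2 * Dv)^2
            * (∑ i, ∑ j, (κ e i j : ℂ) * ξ s₀ i * ξ s₀ j)
          + (c : ℂ) / (2 * Dv)
            * ∑ i, ∑ j, ((κ e i j : ℂ) * deriv (fun s => ξ s i) s₀ * ξ s₀ j
              + (κ e i j : ℂ) * ξ s₀ i * deriv (fun s => ξ s j) s₀)))
        = ∑ e, ((ξ s₀ e * deriv (fun s => ξt s e) s₀) / Dv
            + (-((c : ℂ)^2 * deriv ξ0 s₀) / (2 * Dv^3))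
              * (ξ s₀ e * (∑ i, ∑ j, (κ e i j : ℂ) * ξ s₀ i * ξ s₀ j))
            + ((c : ℂ) / (2 * Dv^2))
              * (ξ s₀ e * (∑ i, ∑ j, ((κ e i j : ℂ) * deriv (fun s => ξ s i) s₀ * ξ s₀ j
                + (κ e i j : ℂ) * ξ s₀ i * deriv (fun s => ξ s j) s₀)))) :=
          Finset.sum_congr rfl fun e _ => by ring
      _ = (∑ e, (ξ s₀ e * deriv (fun s => ξt s e) s₀) / Dv)
            + (-((c : ℂ)^2 * deriv ξ0 s₀) / (2 * Dv^3))
              * (∑ e, ξ s₀ e * (∑ i, ∑ j, (κ e i j : ℂ) * ξ s₀ i * ξ s₀ j))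
            + ((c : ℂ) / (2 * Dv^2))
              * (∑ e, ξ s₀ e * (∑ i, ∑ j, ((κ e i j : ℂ) * deriv (fun s => ξ s i) s₀ * ξ s₀ j
                + (κ e i j : ℂ) * ξ s₀ i * deriv (fun s => ξ s j) s₀))) := by
          rw [sum_split3, sum_pull, sum_pull]
      _ = _ := by
          rw [hxP, hxdP, ← Finset.sum_div]
          ring
  rw [hsum]
  have hiD : Dv * Dv⁻¹ = 1 := mul_inv_cancel₀ hden
  have := key19 (a : ℂ) (b : ℂ) (c : ℂ) (d : ℂ) (ξ0 s₀) (deriv ξ0 s₀) (cub s₀)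
    (∑ i, ∑ j, ∑ l, (κ i j l : ℂ) * deriv (fun s => ξ s i) s₀ * ξ s₀ j * ξ s₀ l)
    (∑ e, ξ s₀ e * deriv (fun s => ξt s e) s₀)
    (deriv ξt0 s₀) (deriv αt s₀) Dv Dv⁻¹ hdetC hDvdef.symm hiD hden
  linear_combination this
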